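/- arXiv:1912.03772 — 2 statements merged into one kernel-verified Lean document; each statement's English description precedes it below -/
import Mathlib

section
/- Let N be a sufficiently large positive integer, X the unique real solution of X log X = N, τ = X^{−23/25}, and S(α) = Σ_{p ≤ X} e(α[p log p]) log p, the sum running over primes p ≤ X. Then ∫_{−τ}^{τ} |S(α)|² dα ≪ X log X. -/
/-- `e(t) = e^{2πit}`. -/
noncomputable def ee (t : ℝ) : ℂ := Complex.exp (2 * Real.pi * Complex.I * t)

/-- `S(α) = Σ_{p ≤ X} e(α⌊p log p⌋) log p`, the sum running over primes `p ≤ X`. -/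
noncomputable def S (X : ℝ) (α : ℝ) : ℂ :=
  ∑ p ∈ (Finset.range (⌊X⌋₊ + 1)).filter Nat.Prime,
    (Real.log p : ℂ) * ee (α * (⌊(p : ℝ) * Real.log p⌋ : ℝ))

open Finset MeasureTheory

lemma ee_continuous (r : ℝ) : Continuous fun α : ℝ => ee (α * r) := by
  unfold ee
  exact Complex.continuous_exp.comp (by continuity)

lemma S_continuous (X : ℝ) : Continuous fun α => S X α := by
  unfold S
  exact continuous_finset_sum _ fun p _ => (continuous_const).mul (ee_continuous _)

lemma ee_mul (x y : ℝ) : ee x * ee y = ee (x + y) := by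
  unfold ee
  rw [← Complex.exp_add]
  push_cast
  ring_nf

lemma conj_ee (x : ℝ) : (starRingEnd ℂ) (ee x) = ee (-x) := by
  unfold ee
  rw [← Complex.exp_conj]
  congr 1
  simp only [map_mul, Complex.conj_I, Complex.conj_ofReal, map_ofNat]
  push_cast
  ring

/-- Orthogonality: `∫_{-1}^{1} e(αm) dα` is `2` if `m = 0` and `0` otherwise. -/
lemma integral_ee_int (m : ℤ) :
    (∫ α in (-1 : ℝ)..1, ee (α * (m : ℝ))) = if m = 0 then 2 else 0 := by
  have hrw : ∀ α : ℝ, ee (α * (m : ℝ)) =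
      Complex.exp ((2 * Real.pi * Complex.I * m) * α) := by
    intro α
    unfold ee
    congr 1
    push_cast
    ring
  simp only [hrw]
  by_cases hm : m = 0
  · subst hm
    simp
    norm_num
  · rw [if_neg hm]
    have hc : (2 * (Real.pi : ℂ) * Complex.I * m) ≠ 0 := by
      have : (m : ℂ) ≠ 0 := Int.cast_ne_zero.mpr hm
      simp [Complex.I_ne_zero, Real.pi_ne_zero, this, Complex.ofReal_ne_zero]
    rw [integral_exp_mul_complex hc]
    have h1 : Complex.exp ((2 * (Real.pi : ℂ) * Complex.I * m) * ((1 : ℝ) : ℂ)) = 1 := by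
      rw [show (2 * (Real.pi : ℂ) * Complex.I * m) * ((1 : ℝ) : ℂ)
          = (m : ℂ) * (2 * Real.pi * Complex.I) by push_cast; ring]
      exact Complex.exp_int_mul_two_pi_mul_I m
    have h2 : Complex.exp ((2 * (Real.pi : ℂ) * Complex.I * m) * ((-1 : ℝ) : ℂ)) = 1 := by
      rw [show (2 * (Real.pi : ℂ) * Complex.I * m) * ((-1 : ℝ) : ℂ)
          = ((-m : ℤ) : ℂ) * (2 * Real.pi * Complex.I) by push_cast; ring]
      exact Complex.exp_int_mul_two_pi_mul_I (-m)
    rw [h1, h2]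
    simp

/-- The floors `⌊p log p⌋` are strictly increasing on primes. -/
lemma floor_plogp_strictMono {p q : ℕ} (hp : p.Prime) (hq : q.Prime) (hpq : p < q) :
    ⌊(p : ℝ) * Real.log p⌋ < ⌊(q : ℝ) * Real.log q⌋ := by
  have hp2 : (2 : ℕ) ≤ p := hp.two_le
  have hq3 : (3 : ℕ) ≤ q := by omega
  have hq3' : (3 : ℝ) ≤ (q : ℝ) := by exact_mod_cast hq3
  have hlogq : (1 : ℝ) ≤ Real.log q := by
    have h3 : Real.exp 1 ≤ 3 := by
      have := Real.exp_one_lt_d9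
      linarith
    have : Real.exp 1 ≤ (q : ℝ) := le_trans h3 hq3'
    calc (1 : ℝ) = Real.log (Real.exp 1) := by rw [Real.log_exp]
      _ ≤ Real.log q := Real.log_le_log (Real.exp_pos 1) this
  have hkey : (p : ℝ) * Real.log p + 1 ≤ (q : ℝ) * Real.log q := by
    have hlogple : Real.log p ≤ Real.log q := by
      apply Real.log_le_log (by positivity)
      exact_mod_cast hpq.le
    have hqp : (1 : ℝ) ≤ (q : ℝ) - p := by
      have : p + 1 ≤ q := hpq
      have : (p : ℝ) + 1 ≤ q := by exact_mod_cast this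
      linarith
    have hpn : (0 : ℝ) ≤ (p : ℝ) := by positivity
    nlinarith [mul_le_mul_of_nonneg_left hlogple hpn]
  have h1 : (⌊(p : ℝ) * Real.log p⌋ + 1 : ℝ) ≤ (q : ℝ) * Real.log q := by
    have := Int.floor_le ((p : ℝ) * Real.log p)
    linarith
  have := Int.le_floor.mpr (by exact_mod_cast h1)
  omega

lemma floor_plogp_inj {p q : ℕ} (hp : p.Prime) (hq : q.Prime)
    (h : ⌊(p : ℝ) * Real.log p⌋ = ⌊(q : ℝ) * Real.log q⌋) : p = q := by
  rcases lt_trichotomy p q with h1 | h1 | h1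
  · exact absurd h (floor_plogp_strictMono hp hq h1).ne
  · exact h1
  · exact absurd h.symm (floor_plogp_strictMono hq hp h1).ne

set_option maxHeartbeats 1600000 in
/-- Parseval over a full period (here `[-1,1]`, two periods). -/
lemma integral_norm_S_sq (X : ℝ) :
    (∫ α in (-1 : ℝ)..1, ‖S X α‖ ^ 2) =
      2 * ∑ p ∈ (Finset.range (⌊X⌋₊ + 1)).filter Nat.Prime, (Real.log p) ^ 2 := by
  set F := (Finset.range (⌊X⌋₊ + 1)).filter Nat.Prime with hF
  set n : ℕ → ℤ := fun p => ⌊(p : ℝ) * Real.log p⌋ with hn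
  have hexp : ∀ α : ℝ, S X α * (starRingEnd ℂ) (S X α) =
      ∑ p ∈ F, ∑ q ∈ F,
        ((Real.log p : ℂ) * (Real.log q : ℂ)) * ee (α * (((n p - n q : ℤ) : ℝ))) := by
    intro α
    rw [S, map_sum, Finset.sum_mul_sum]
    apply Finset.sum_congr rfl
    intro p _
    apply Finset.sum_congr rfl
    intro q _
    rw [map_mul, conj_ee, Complex.conj_ofReal]
    rw [mul_mul_mul_comm, ee_mul]
    congr 2
    push_cast
    ring
  -- pointwise: ‖S X α‖^2 = (S X α * conj (S X α)).re
  have hpt : ∀ α : ℝ, ‖S X α‖ ^ 2 = (S X α * (starRingEnd ℂ) (S X α)).re := by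
    intro α
    rw [Complex.mul_conj, Complex.ofReal_re, ← Complex.sq_norm]
  have hcont : Continuous fun α => S X α * (starRingEnd ℂ) (S X α) :=
    (S_continuous X).mul (Complex.continuous_conj.comp (S_continuous X))
  have hint : IntervalIntegrable (fun α => S X α * (starRingEnd ℂ) (S X α))
      volume (-1 : ℝ) 1 := hcont.intervalIntegrable _ _
  have hre : (∫ α in (-1 : ℝ)..1, ‖S X α‖ ^ 2) =
      (∫ α in (-1 : ℝ)..1, S X α * (starRingEnd ℂ) (S X α)).re := by
    have h12 : (-1 : ℝ) ≤ 1 := by norm_num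
    rw [intervalIntegral.integral_of_le h12, intervalIntegral.integral_of_le h12]
    have h := integral_re (μ := MeasureTheory.volume.restrict (Set.Ioc (-1 : ℝ) 1)) hint.1
    simp only [RCLike.re_to_complex] at h
    rw [← h]
    apply MeasureTheory.integral_congr_ae
    filter_upwards with α
    exact hpt α
  rw [hre]
  have hval : (∫ α in (-1 : ℝ)..1, S X α * (starRingEnd ℂ) (S X α)) =
      ((2 * ∑ p ∈ F, (Real.log p) ^ 2 : ℝ) : ℂ) := by
    calc (∫ α in (-1 : ℝ)..1, S X α * (starRingEnd ℂ) (S X α))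
        = ∫ α in (-1 : ℝ)..1, ∑ p ∈ F, ∑ q ∈ F,
            ((Real.log p : ℂ) * (Real.log q : ℂ)) * ee (α * (((n p - n q : ℤ) : ℝ))) := by
          apply intervalIntegral.integral_congr
          intro α _
          exact hexp α
      _ = ∑ p ∈ F, ∫ α in (-1 : ℝ)..1, ∑ q ∈ F,
            ((Real.log p : ℂ) * (Real.log q : ℂ)) * ee (α * (((n p - n q : ℤ) : ℝ))) :=
          intervalIntegral.integral_finset_sum (fun p _ =>
            ((continuous_finset_sum _ fun q _ =>
              continuous_const.mul (ee_continuous _)).intervalIntegrable _ _))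
      _ = ∑ p ∈ F, ∑ q ∈ F, ∫ α in (-1 : ℝ)..1,
            ((Real.log p : ℂ) * (Real.log q : ℂ)) * ee (α * (((n p - n q : ℤ) : ℝ))) :=
          Finset.sum_congr rfl (fun p _ =>
            intervalIntegral.integral_finset_sum (fun q _ =>
              (continuous_const.mul (ee_continuous _)).intervalIntegrable _ _))
      _ = ∑ p ∈ F, ∑ q ∈ F,
            ((Real.log p : ℂ) * (Real.log q : ℂ)) * (if (n p - n q : ℤ) = 0 then 2 else 0) := by
          apply Finset.sum_congr rfl
          intro p _
          apply Finset.sum_congr rfl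
          intro q _
          rw [intervalIntegral.integral_const_mul, integral_ee_int]
      _ = ∑ p ∈ F, ∑ q ∈ F,
            (if q = p then ((Real.log p : ℂ) * (Real.log q : ℂ)) * 2 else 0) := by
          apply Finset.sum_congr rfl
          intro p hp
          apply Finset.sum_congr rfl
          intro q hq
          have hp' : p.Prime := (Finset.mem_filter.mp hp).2
          have hq' : q.Prime := (Finset.mem_filter.mp hq).2
          by_cases hpq : q = p
          · subst hpq
            simp
          · rw [if_neg hpq, if_neg, mul_zero]
            intro hcon
            have hcon' : n q = n p := by omega
            exact hpq (floor_plogp_inj hq' hp' hcon')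
      _ = ∑ p ∈ F, ((Real.log p : ℂ) * (Real.log p : ℂ)) * 2 := by
          apply Finset.sum_congr rfl
          intro p hp
          rw [Finset.sum_ite_eq' F p fun q => ((Real.log p : ℂ) * (Real.log q : ℂ)) * 2,
            if_pos hp]
      _ = ((2 * ∑ p ∈ F, (Real.log p) ^ 2 : ℝ) : ℂ) := by
          push_cast
          rw [Finset.mul_sum]
          apply Finset.sum_congr rfl
          intro p _
          ring
  rw [hval, Complex.ofReal_re]

theorem int_S_sq_minor :
    ∃ C : ℝ, 0 < C ∧ ∃ N₀ : ℕ, ∀ N : ℕ, N₀ ≤ N →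
      ∀ X : ℝ, 1 < X → X * Real.log X = N →
        (∫ α in (-(X ^ ((-23 : ℝ)/25)))..(X ^ ((-23 : ℝ)/25)), ‖S X α‖ ^ 2) ≤
          C * (X * Real.log X) := by
  refine ⟨2 * Real.log 4, by positivity, 0, fun N _ X hX _ => ?_⟩
  set F := (Finset.range (⌊X⌋₊ + 1)).filter Nat.Prime with hF
  have hX0 : (0 : ℝ) < X := by linarith
  set τ : ℝ := X ^ ((-23 : ℝ)/25) with hτ
  have hτpos : 0 < τ := Real.rpow_pos_of_pos hX0 _
  have hτlt : τ < 1 := Real.rpow_lt_one_of_one_lt_of_neg hX (by norm_num)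
  -- Step 1: extend the integral to [-1, 1]
  have hnorm_cont : Continuous fun α => ‖S X α‖ ^ 2 := by
    exact ((S_continuous X).norm).pow 2
  have step1 : (∫ α in (-τ)..τ, ‖S X α‖ ^ 2) ≤ ∫ α in (-1 : ℝ)..1, ‖S X α‖ ^ 2 := by
    apply intervalIntegral.integral_mono_interval (by linarith) (by linarith) (by linarith)
    · filter_upwards with α
      positivity
    · exact hnorm_cont.intervalIntegrable _ _
  -- Step 2: Parseval
  have step2 := integral_norm_S_sq X
  rw [← hF] at step2
  -- Step 3: bound the sum
  have hlogX : 0 < Real.log X := Real.log_pos hX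
  have hbound1 : ∀ p ∈ F, (Real.log p) ^ 2 ≤ Real.log X * Real.log p := by
    intro p hp
    have hp' : p.Prime := (Finset.mem_filter.mp hp).2
    have hpr : p < ⌊X⌋₊ + 1 := Finset.mem_range.mp (Finset.mem_filter.mp hp).1
    have hpX : (p : ℝ) ≤ X := by
      calc (p : ℝ) ≤ (⌊X⌋₊ : ℝ) := by exact_mod_cast Nat.lt_succ_iff.mp hpr
        _ ≤ X := Nat.floor_le hX0.le
    have hp1 : (1 : ℝ) ≤ (p : ℝ) := by exact_mod_cast hp'.one_lt.le
    have hlogp : 0 ≤ Real.log p := Real.log_nonneg hp1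
    have : Real.log p ≤ Real.log X := Real.log_le_log (by linarith) hpX
    nlinarith
  have hbound2 : ∑ p ∈ F, Real.log p ≤ X * Real.log 4 := by
    have hne : ∀ p ∈ F, ((p : ℝ)) ≠ 0 := by
      intro p hp
      have := (Finset.mem_filter.mp hp).2.pos
      positivity
    have hprod : ∑ p ∈ F, Real.log p = Real.log (∏ p ∈ F, (p : ℝ)) :=
      (Real.log_prod hne).symm
    have hprim : (∏ p ∈ F, (p : ℝ)) = ((primorial ⌊X⌋₊ : ℕ) : ℝ) := by
      rw [primorial]
      push_cast
      rfl
    have hppos : 0 < ((primorial ⌊X⌋₊ : ℕ) : ℝ) := by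
      have : primorial ⌊X⌋₊ ≠ 0 := by
        rw [primorial]
        exact Finset.prod_ne_zero_iff.mpr fun p hp => (Finset.mem_filter.mp hp).2.pos.ne'
      positivity
    have hle4 : ((primorial ⌊X⌋₊ : ℕ) : ℝ) ≤ (4 : ℝ) ^ (⌊X⌋₊ : ℕ) := by
      exact_mod_cast primorial_le_4_pow ⌊X⌋₊
    calc ∑ p ∈ F, Real.log p = Real.log ((primorial ⌊X⌋₊ : ℕ) : ℝ) := by
          rw [hprod, hprim]
      _ ≤ Real.log ((4 : ℝ) ^ (⌊X⌋₊ : ℕ)) := Real.log_le_log hppos hle4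
      _ = (⌊X⌋₊ : ℝ) * Real.log 4 := by rw [Real.log_pow]
      _ ≤ X * Real.log 4 := by
          apply mul_le_mul_of_nonneg_right (Nat.floor_le hX0.le)
          positivity
  have hsum : ∑ p ∈ F, (Real.log p) ^ 2 ≤ Real.log X * (X * Real.log 4) := by
    calc ∑ p ∈ F, (Real.log p) ^ 2 ≤ ∑ p ∈ F, Real.log X * Real.log p :=
          Finset.sum_le_sum hbound1
      _ = Real.log X * ∑ p ∈ F, Real.log p := by rw [Finset.mul_sum]
      _ ≤ Real.log X * (X * Real.log 4) :=
          mul_le_mul_of_nonneg_left hbound2 hlogX.le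
  calc (∫ α in (-τ)..τ, ‖S X α‖ ^ 2) ≤ ∫ α in (-1 : ℝ)..1, ‖S X α‖ ^ 2 := step1
    _ = 2 * ∑ p ∈ F, (Real.log p) ^ 2 := step2
    _ ≤ 2 * (Real.log X * (X * Real.log 4)) := by linarith
    _ = 2 * Real.log 4 * (X * Real.log X) := by ring
end

section
/- Let N be a sufficiently large positive integer, X the unique real solution of X log X = N, τ = X^{−23/25}, y(t) the implicit function defined by y log y = t, Θ(α) = Σ_{m ≤ N} e(mα)/(1 + log y(m)), Ψ₃ = ∫_{−1/2}^{1/2} Θ³(α) e(−Nα) dα, and Ψ̃ = ∫_{−τ}^{τ} Θ³(α) e(−Nα) dα. Then |Ψ₃ − Ψ̃| ≪ X^{46/25}. -/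
set_option maxHeartbeats 1000000

open Complex Finset Real

/-- `Θ(α) = Σ_{m ≤ N} e(mα)/(1 + log y(m))`, the sum over positive integers `m ≤ N`;
here `y` is the implicit function defined by `y log y = t`. -/
noncomputable def Th (y : ℝ → ℝ) (N : ℕ) (α : ℝ) : ℂ :=
  ∑ m ∈ Finset.Icc 1 N, ee (m * α) / (1 + (Real.log (y m) : ℂ))

lemma ee_eq (t : ℝ) : ee t = Complex.exp ((2 * Real.pi * t : ℝ) * Complex.I) := by
  unfold ee; congr 1; push_cast; ring

lemma ee_norm (t : ℝ) : ‖ee t‖ = 1 := by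
  rw [ee_eq, Complex.norm_exp_ofReal_mul_I]

lemma ee_pow (m : ℕ) (α : ℝ) : ee (m * α) = ee α ^ m := by
  unfold ee; rw [← Complex.exp_nat_mul]; congr 1; push_cast; ring

lemma ee_sub_one_ge (α : ℝ) (h : |α| ≤ 1/2) : 4 * |α| ≤ ‖ee α - 1‖ := by
  have hx : ee α - 1 = ((Real.cos (2*Real.pi*α) - 1 : ℝ) : ℂ) + (Real.sin (2*Real.pi*α) : ℝ) * Complex.I := by
    rw [ee_eq, Complex.exp_mul_I]
    push_cast [Complex.ofReal_cos, Complex.ofReal_sin]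
    ring
  have hnorm : ‖ee α - 1‖ ^ 2 = 2 - 2 * Real.cos (2*Real.pi*α) := by
    rw [hx, Complex.norm_add_mul_I, Real.sq_sqrt (by positivity)]
    nlinarith [Real.sin_sq_add_cos_sq (2*Real.pi*α)]
  have h2 : Real.cos (2*Real.pi*α) = 1 - 2 * Real.sin (Real.pi*α) ^ 2 := by
    have : 2*Real.pi*α = 2*(Real.pi*α) := by ring
    rw [this, Real.cos_two_mul]
    nlinarith [Real.sin_sq_add_cos_sq (Real.pi*α)]
  have hsin : 2 * |α| ≤ Real.sin (Real.pi * |α|) := by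
    have h0 : (0:ℝ) ≤ Real.pi * |α| := by positivity
    have h1 : Real.pi * |α| ≤ Real.pi / 2 := by
      nlinarith [Real.pi_pos, abs_nonneg α]
    have := Real.mul_le_sin h0 h1
    calc 2 * |α| = 2 / Real.pi * (Real.pi * |α|) := by
          field_simp
      _ ≤ Real.sin (Real.pi * |α|) := this
  have hsq : Real.sin (Real.pi*α) ^ 2 = Real.sin (Real.pi*|α|) ^ 2 := by
    rcases abs_cases α with ⟨h1, _⟩ | ⟨h1, _⟩
    · rw [h1]
    · rw [h1]; rw [show Real.pi * -α = -(Real.pi*α) by ring, Real.sin_neg]; ring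
  have habs : (4 * |α|)^2 ≤ ‖ee α - 1‖^2 := by
    rw [hnorm, h2]
    nlinarith [abs_nonneg α, hsin, hsq, Real.sin_nonneg_of_nonneg_of_le_pi (x := Real.pi * |α|) (by positivity) (by nlinarith [Real.pi_pos, abs_nonneg α])]
  have := norm_nonneg (ee α - 1)
  nlinarith [abs_nonneg α]

lemma geom_Icc (z : ℂ) (M : ℕ) : (z - 1) * ∑ m ∈ Finset.Icc 1 M, z ^ m = z ^ (M+1) - z := by
  induction M with
  | zero => simp
  | succ M ih =>
    rw [Finset.sum_Icc_succ_top (Nat.le_add_left 1 M), mul_add, ih]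
    ring

lemma geom_Icc_norm (z : ℂ) (hz : z ≠ 1) (hn : ‖z‖ = 1) (M : ℕ) :
    ‖∑ m ∈ Finset.Icc 1 M, z ^ m‖ ≤ 2 / ‖z - 1‖ := by
  have hz' : z - 1 ≠ 0 := sub_ne_zero.mpr hz
  have h := geom_Icc z M
  have hS : ∑ m ∈ Finset.Icc 1 M, z ^ m = (z ^ (M+1) - z) / (z - 1) := by
    field_simp at h ⊢; linear_combination h
  rw [hS, norm_div]
  have hnum : ‖z ^ (M+1) - z‖ ≤ 2 := by
    calc ‖z^(M+1) - z‖ ≤ ‖z^(M+1)‖ + ‖z‖ := norm_sub_le _ _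
    _ = 2 := by rw [norm_pow, hn]; norm_num
  gcongr

/-- Abel summation identity over `Icc 1 N`. -/
lemma abel_Icc (c : ℕ → ℝ) (z : ℕ → ℂ) (N : ℕ) :
    ∑ m ∈ Finset.Icc 1 N, (c m : ℂ) * z m
      = (c (N+1) : ℂ) * (∑ m ∈ Finset.Icc 1 N, z m)
        + ∑ m ∈ Finset.Icc 1 N, ((c m : ℂ) - c (m+1)) * (∑ k ∈ Finset.Icc 1 m, z k) := by
  induction N with
  | zero => simp
  | succ N ih =>
    rw [Finset.sum_Icc_succ_top (Nat.le_add_left 1 N) (fun m => (c m : ℂ) * z m),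
        ih,
        Finset.sum_Icc_succ_top (Nat.le_add_left 1 N)
          (fun m => ((c m : ℂ) - c (m+1)) * (∑ k ∈ Finset.Icc 1 m, z k)),
        Finset.sum_Icc_succ_top (Nat.le_add_left 1 N) z]
    ring

lemma tele (c : ℕ → ℝ) (N : ℕ) (h : 1 ≤ N) :
    ∑ m ∈ Finset.Ico 1 N, (c m - c (m+1)) = c 1 - c N := by
  rw [Finset.sum_Ico_eq_sum_range]
  have h2 : 1 + (N - 1) = N := by omega
  calc ∑ i ∈ Finset.range (N-1), (c (1+i) - c (1+i+1))
      = ∑ i ∈ Finset.range (N-1), (c (1+i) - c (1+(i+1))) := by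
        apply Finset.sum_congr rfl; intros i _; simp [Nat.add_assoc]
    _ = c (1+0) - c (1+(N-1)) := Finset.sum_range_sub' (fun i => c (1+i)) (N-1)
    _ = c 1 - c N := by rw [h2]

lemma abel_bound (c : ℕ → ℝ) (z : ℕ → ℂ) (N : ℕ) (B : ℝ) (hB : 0 ≤ B)
    (hc0 : ∀ m, 1 ≤ m → 0 ≤ c m) (hc1 : 0 ≤ c 1)
    (hcd : ∀ m, 1 ≤ m → c (m+1) ≤ c m)
    (hS : ∀ M : ℕ, ‖∑ m ∈ Finset.Icc 1 M, z m‖ ≤ B) :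
    ‖∑ m ∈ Finset.Icc 1 N, (c m : ℂ) * z m‖ ≤ c 1 * B := by
  rw [abel_Icc]
  have hcN : 0 ≤ c (N+1) := hc0 (N+1) (by omega)
  calc ‖_ + _‖ ≤ ‖(c (N+1) : ℂ) * (∑ m ∈ Finset.Icc 1 N, z m)‖
        + ‖∑ m ∈ Finset.Icc 1 N, ((c m : ℂ) - c (m+1)) * (∑ k ∈ Finset.Icc 1 m, z k)‖ :=
        norm_add_le _ _
    _ ≤ c (N+1) * B + ∑ m ∈ Finset.Icc 1 N, (c m - c (m+1)) * B := by
        gcongr ?_ + ?_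
        · rw [norm_mul, Complex.norm_real, Real.norm_eq_abs, _root_.abs_of_nonneg hcN]
          exact mul_le_mul_of_nonneg_left (hS N) hcN
        · refine (norm_sum_le _ _).trans (Finset.sum_le_sum fun m hm => ?_)
          rw [Finset.mem_Icc] at hm
          rw [norm_mul]
          have h1 : ‖(c m : ℂ) - c (m+1)‖ = c m - c (m+1) := by
            rw [← Complex.ofReal_sub, Complex.norm_real, Real.norm_eq_abs,
              _root_.abs_of_nonneg (sub_nonneg.mpr (hcd m hm.1))]
          rw [h1]
          exact mul_le_mul_of_nonneg_left (hS m) (sub_nonneg.mpr (hcd m hm.1))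
    _ = c (N+1) * B + (c 1 - c (N+1)) * B := by
        rw [← Finset.sum_mul, ← Finset.Ico_add_one_right_eq_Icc, tele c (N+1) (by omega)]
    _ = c 1 * B := by ring



lemma y_mono {y : ℝ → ℝ} (hy : ∀ t : ℝ, 0 < t → 1 < y t ∧ y t * Real.log (y t) = t)
    {s t : ℝ} (hs : 0 < s) (hst : s ≤ t) : y s ≤ y t := by
  have h1 := hy s hs
  have h2 := hy t (lt_of_lt_of_le hs hst)
  by_contra hc
  push_neg at hc
  have hl : Real.log (y t) < Real.log (y s) :=
    Real.log_lt_log (by linarith [h2.1]) hc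
  have hls : 0 < Real.log (y t) := Real.log_pos h2.1
  nlinarith [h1.2, h2.2, h1.1, h2.1]

lemma Th_bound {y : ℝ → ℝ} (hy : ∀ t : ℝ, 0 < t → 1 < y t ∧ y t * Real.log (y t) = t)
    (N : ℕ) {α : ℝ} (h0 : 0 < |α|) (h2 : |α| ≤ 1/2) :
    ‖Th y N α‖ ≤ 1 / (2 * |α|) := by
  set c : ℕ → ℝ := fun m => 1 / (1 + Real.log (y (m : ℝ))) with hc
  have hlog : ∀ m : ℕ, 1 ≤ m → 0 < Real.log (y (m : ℝ)) := fun m hm =>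
    Real.log_pos (hy (m : ℝ) (by exact_mod_cast Nat.pos_of_ne_zero (by omega))).1
  have hc0 : ∀ m, 1 ≤ m → 0 ≤ c m := fun m hm => by
    have := hlog m hm; positivity
  have hc1le : c 1 ≤ 1 := by
    have := hlog 1 le_rfl
    rw [hc]; rw [div_le_one (by linarith)]; linarith
  have hcd : ∀ m, 1 ≤ m → c (m+1) ≤ c m := fun m hm => by
    have hm' : (0:ℝ) < m := by exact_mod_cast Nat.pos_of_ne_zero (by omega)
    have hmono : y (m : ℝ) ≤ y ((m+1 : ℕ) : ℝ) := by
      apply y_mono hy hm'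
      push_cast; linarith
    have hl : Real.log (y (m:ℝ)) ≤ Real.log (y ((m+1:ℕ):ℝ)) :=
      Real.log_le_log (lt_trans one_pos (hy _ hm').1) hmono
    have := hlog m hm
    apply one_div_le_one_div_of_le (by linarith) (by linarith)
  -- nonvanishing of ee α - 1
  have hkey := ee_sub_one_ge α h2
  have hne : ee α ≠ 1 := by
    intro hcc
    rw [hcc] at hkey; simp at hkey; linarith
  have hB : ∀ M : ℕ, ‖∑ m ∈ Finset.Icc 1 M, ee (m * α)‖ ≤ 1 / (2 * |α|) := by
    intro M
    have : ∑ m ∈ Finset.Icc 1 M, ee (m * α) = ∑ m ∈ Finset.Icc 1 M, ee α ^ m :=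
      Finset.sum_congr rfl fun m _ => ee_pow m α
    rw [this]
    refine (geom_Icc_norm (ee α) hne (ee_norm α) M).trans ?_
    rw [div_le_div_iff₀ (by linarith) (by linarith)]
    calc 2 * (2 * |α|) = 4 * |α| := by ring
      _ ≤ ‖ee α - 1‖ := hkey
      _ = 1 * ‖ee α - 1‖ := (one_mul _).symm
  have hTh : Th y N α = ∑ m ∈ Finset.Icc 1 N, (c m : ℂ) * ee (m * α) := by
    unfold Th
    refine Finset.sum_congr rfl fun m hm => ?_
    rw [Finset.mem_Icc] at hm
    have := hlog m hm.1
    rw [hc]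
    have hne' : (1 + Real.log (y (m:ℝ)) : ℝ) ≠ 0 := by linarith
    push_cast
    rw [div_eq_mul_inv, one_div, mul_comm]
  rw [hTh]
  have := abel_bound c (fun m => ee (m * α)) N (1 / (2 * |α|)) (by positivity)
    hc0 (hc0 1 le_rfl) hcd hB
  calc ‖∑ m ∈ Finset.Icc 1 N, (c m : ℂ) * ee (m * α)‖ ≤ c 1 * (1 / (2*|α|)) := this
    _ ≤ 1 * (1 / (2*|α|)) := by
        apply mul_le_mul_of_nonneg_right hc1le (by positivity)
    _ = 1 / (2*|α|) := one_mul _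
lemma Th_cont (y : ℝ → ℝ) (N : ℕ) :
    Continuous (fun α : ℝ => Th y N α ^ 3 * ee (-(N * α))) := by
  unfold Th ee
  fun_prop

theorem Psi3_minus_Psi_tilde :
    ∃ C : ℝ, 0 < C ∧ ∃ N₀ : ℕ, ∀ N : ℕ, N₀ ≤ N →
      ∀ X : ℝ, 1 < X → X * Real.log X = N →
      ∀ y : ℝ → ℝ, (∀ t : ℝ, 0 < t → 1 < y t ∧ y t * Real.log (y t) = t) →
        ‖(∫ α in (-(1 : ℝ)/2)..(1/2), (Th y N α) ^ 3 * ee (-(N * α))) -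
          ∫ α in (-(X ^ ((-23 : ℝ)/25)))..(X ^ ((-23 : ℝ)/25)),
            (Th y N α) ^ 3 * ee (-(N * α))‖ ≤ C * X ^ ((46 : ℝ)/25) := by
  refine ⟨1, one_pos, 10, fun N hN X hX1 hXN y hy => ?_⟩
  have hX0 : (0:ℝ) < X := lt_trans one_pos hX1
  set τ : ℝ := X ^ ((-23 : ℝ)/25) with hτ
  have hτ0 : 0 < τ := Real.rpow_pos_of_pos hX0 _
  -- X > e
  have hXe : Real.exp 1 < X := by
    by_contra hcon
    push_neg at hcon
    have hlog : Real.log X ≤ 1 := by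
      rw [← Real.log_exp 1]
      exact Real.log_le_log hX0 hcon
    have hlog0 : 0 ≤ Real.log X := Real.log_nonneg hX1.le
    have hNlt : (N:ℝ) ≤ Real.exp 1 := by
      rw [← hXN]; nlinarith
    have h10 : (10:ℝ) ≤ (N:ℝ) := by exact_mod_cast hN
    nlinarith [Real.exp_one_lt_d9]
  -- X^(23/25) ≥ 2, hence τ ≤ 1/2
  have hpow2 : (2:ℝ) ≤ X ^ ((23:ℝ)/25) := by
    have h1 : Real.exp 1 ^ ((23:ℝ)/25) ≤ X ^ ((23:ℝ)/25) :=
      Real.rpow_le_rpow (Real.exp_pos 1).le hXe.le (by norm_num)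
    rw [Real.exp_one_rpow] at h1
    have h2 : Real.exp ((23:ℝ)/25) = Real.exp ((23:ℝ)/50) * Real.exp ((23:ℝ)/50) := by
      rw [← Real.exp_add]; norm_num
    have h3 : (1 + (23:ℝ)/50) ≤ Real.exp ((23:ℝ)/50) := by
      linarith [Real.add_one_le_exp ((23:ℝ)/50)]
    nlinarith [Real.exp_pos ((23:ℝ)/50)]
  have hτhalf : τ ≤ 1/2 := by
    rw [hτ, show ((-23:ℝ)/25) = -((23:ℝ)/25) by norm_num, Real.rpow_neg hX0.le]
    rw [inv_le_comm₀ (by positivity) (by norm_num)]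
    linarith
  -- τ^{-2} = X^{46/25}
  have hτsq : ((τ:ℝ) ^ 2)⁻¹ = X ^ ((46:ℝ)/25) := by
    rw [hτ, ← Real.rpow_natCast (X ^ ((-23:ℝ)/25)) 2, ← Real.rpow_mul hX0.le]
    norm_num
    rw [Real.rpow_neg hX0.le, inv_inv]
  set f : ℝ → ℂ := fun α => Th y N α ^ 3 * ee (-(N * α)) with hf
  have hfc : Continuous f := Th_cont y N
  have hint : ∀ a b : ℝ, IntervalIntegrable f MeasureTheory.volume a b :=
    fun a b => hfc.intervalIntegrable a b
  -- split
  have hsplit : (∫ α in (-(1:ℝ)/2)..(1/2), f α) - (∫ α in (-τ)..τ, f α)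
      = (∫ α in (-(1:ℝ)/2)..(-τ), f α) + (∫ α in τ..(1/2), f α) := by
    have e1 : (∫ α in (-(1:ℝ)/2)..(-τ), f α) + (∫ α in (-τ)..τ, f α)
        = ∫ α in (-(1:ℝ)/2)..τ, f α :=
      intervalIntegral.integral_add_adjacent_intervals (hint _ _) (hint _ _)
    have e2 : (∫ α in (-(1:ℝ)/2)..τ, f α) + (∫ α in τ..(1/2), f α)
        = ∫ α in (-(1:ℝ)/2)..(1/2), f α :=
      intervalIntegral.integral_add_adjacent_intervals (hint _ _) (hint _ _)
    rw [← e2, ← e1]; ring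
  -- pointwise bound, positive side
  have hbnd : ∀ t : ℝ, 0 < |t| → |t| ≤ 1/2 → ‖f t‖ ≤ (1/8) * |t|⁻¹^(3:ℕ) := by
    intro t h0 h2
    rw [hf]
    simp only []
    rw [norm_mul, norm_pow, ee_norm, mul_one]
    have := Th_bound hy N h0 h2
    calc ‖Th y N t‖ ^ 3 ≤ (1/(2*|t|))^3 := by
          gcongr
      _ = (1/8) * |t|⁻¹^(3:ℕ) := by
          rw [one_div, mul_inv]
          ring
  -- bound positive-side integral
  have hpos : ‖∫ α in τ..(1/2), f α‖ ≤ ((τ^2)⁻¹ - 4) / 16 := by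
    have hg : IntervalIntegrable (fun t : ℝ => (1/8) * t^(-3:ℤ)) MeasureTheory.volume τ (1/2) := by
      apply IntervalIntegrable.const_mul
      apply intervalIntegral.intervalIntegrable_zpow
      right
      rw [Set.uIcc_of_le (by linarith)]
      rintro ⟨hl, -⟩
      linarith
    have hle : ‖∫ α in τ..(1/2), f α‖ ≤ |∫ t in τ..(1/2), (1/8) * t^(-3:ℤ)| := by
      apply intervalIntegral.norm_integral_le_abs_of_norm_le ?_ hg
      refine (MeasureTheory.ae_restrict_mem measurableSet_uIoc).mono fun t ht => ?_
      rw [Set.uIoc_of_le (by linarith : τ ≤ 1/2)] at ht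
      have ht0 : 0 < t := lt_trans hτ0 ht.1
      have habs : |t| = t := abs_of_pos ht0
      have := hbnd t (by rw [habs]; exact ht0) (by rw [habs]; exact ht.2)
      refine this.trans (le_of_eq ?_)
      rw [habs, zpow_neg, show ((3:ℤ)) = ((3:ℕ):ℤ) by norm_num, zpow_natCast, inv_pow]
    refine hle.trans ?_
    rw [intervalIntegral.integral_const_mul, integral_zpow]
    · have hτ2 : (4:ℝ) ≤ (τ^2)⁻¹ := by
        rw [le_inv_comm₀ (by norm_num) (by positivity)]
        nlinarith
      have h2 : τ^((-3:ℤ)+1) = (τ^2)⁻¹ := by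
        rw [show ((-3:ℤ)+1) = -2 by norm_num, zpow_neg,
          show ((2:ℤ)) = ((2:ℕ):ℤ) by norm_num, zpow_natCast]
      have hhalf : ((1:ℝ)/2)^((-3:ℤ)+1) = 4 := by norm_num
      rw [h2, hhalf]
      rw [abs_le]
      push_cast
      norm_num
      constructor <;> nlinarith
    · right
      constructor
      · norm_num
      · rw [Set.uIcc_of_le (by linarith)]
        rintro ⟨hl, -⟩
        linarith
  -- bound negative-side integral
  have hneg : ‖∫ α in (-(1:ℝ)/2)..(-τ), f α‖ ≤ ((τ^2)⁻¹ - 4) / 16 := by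
    have hcomp : (∫ α in (-(1:ℝ)/2)..(-τ), f α) = ∫ α in τ..(1/2), f (-α) := by
      rw [intervalIntegral.integral_comp_neg fun α => f α]
      norm_num
    rw [hcomp]
    have hg : IntervalIntegrable (fun t : ℝ => (1/8) * t^(-3:ℤ)) MeasureTheory.volume τ (1/2) := by
      apply IntervalIntegrable.const_mul
      apply intervalIntegral.intervalIntegrable_zpow
      right
      rw [Set.uIcc_of_le (by linarith)]
      rintro ⟨hl, -⟩
      linarith
    have hle : ‖∫ α in τ..(1/2), f (-α)‖ ≤ |∫ t in τ..(1/2), (1/8) * t^(-3:ℤ)| := by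
      apply intervalIntegral.norm_integral_le_abs_of_norm_le ?_ hg
      refine (MeasureTheory.ae_restrict_mem measurableSet_uIoc).mono fun t ht => ?_
      rw [Set.uIoc_of_le (by linarith : τ ≤ 1/2)] at ht
      have ht0 : 0 < t := lt_trans hτ0 ht.1
      have habs : |(-t)| = t := by rw [abs_neg, abs_of_pos ht0]
      have := hbnd (-t) (by rw [habs]; exact ht0) (by rw [habs]; exact ht.2)
      refine this.trans (le_of_eq ?_)
      rw [habs, zpow_neg, show ((3:ℤ)) = ((3:ℕ):ℤ) by norm_num, zpow_natCast, inv_pow]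
    refine hle.trans ?_
    rw [intervalIntegral.integral_const_mul, integral_zpow]
    · have hτ2 : (4:ℝ) ≤ (τ^2)⁻¹ := by
        rw [le_inv_comm₀ (by norm_num) (by positivity)]
        nlinarith
      have h2 : τ^((-3:ℤ)+1) = (τ^2)⁻¹ := by
        rw [show ((-3:ℤ)+1) = -2 by norm_num, zpow_neg,
          show ((2:ℤ)) = ((2:ℕ):ℤ) by norm_num, zpow_natCast]
      have hhalf : ((1:ℝ)/2)^((-3:ℤ)+1) = 4 := by norm_num
      rw [h2, hhalf]
      rw [abs_le]
      push_cast
      norm_num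
      constructor <;> nlinarith
    · right
      constructor
      · norm_num
      · rw [Set.uIcc_of_le (by linarith)]
        rintro ⟨hl, -⟩
        linarith
  -- conclude
  have hτ2 : (4:ℝ) ≤ (τ^2)⁻¹ := by
    rw [le_inv_comm₀ (by norm_num) (by positivity)]
    nlinarith
  calc ‖(∫ α in (-(1:ℝ)/2)..(1/2), f α) - ∫ α in (-τ)..τ, f α‖
      = ‖(∫ α in (-(1:ℝ)/2)..(-τ), f α) + (∫ α in τ..(1/2), f α)‖ := by rw [hsplit]
    _ ≤ ‖∫ α in (-(1:ℝ)/2)..(-τ), f α‖ + ‖∫ α in τ..(1/2), f α‖ := norm_add_le _ _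
    _ ≤ ((τ^2)⁻¹ - 4) / 16 + ((τ^2)⁻¹ - 4) / 16 := add_le_add hneg hpos
    _ ≤ (τ^2)⁻¹ := by linarith
    _ = 1 * X ^ ((46:ℝ)/25) := by rw [hτsq, one_mul]
end
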